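/- Let ℓ ∈ ℝ_{>0}^r be generic with r = 2k+1, and let c ≥ 0 with l(J) ≠ ±c for all J. Define L = {J ⊆ {1,...,r} : l(J) > c}, S = {I : l(I) < −c}, and L' = {J ∈ L : ∃ j ∈ J, l(J \ {j}) < −c}. Suppose L' is nonempty and every J ∈ L' contains at least k+1 elements j with l(J \ {j}) < −c. Then L = {J : |J| ≥ k+1} and c < min{l(K) : l(K) > 0}. -/
import Mathlib


/-- `l(J) = ∑_{j ∈ J} l_j − ∑_{j ∉ J} l_j`. -/
noncomputable def lval {r : ℕ} (l : Fin r → ℝ) (J : Finset (Fin r)) : ℝ :=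
  ∑ j ∈ J, l j - ∑ j ∈ Jᶜ, l j

lemma lval_eq {r : ℕ} (l : Fin r → ℝ) (J : Finset (Fin r)) :
    lval l J = 2 * ∑ j ∈ J, l j - ∑ j, l j := by
  have h := Finset.sum_add_sum_compl J l
  unfold lval
  linarith

lemma lval_compl {r : ℕ} (l : Fin r → ℝ) (J : Finset (Fin r)) :
    lval l Jᶜ = -lval l J := by
  unfold lval
  rw [compl_compl]
  ring

lemma lval_mono {r : ℕ} (l : Fin r → ℝ) (hl : ∀ j, 0 < l j)
    {J K : Finset (Fin r)} (h : J ⊆ K) : lval l J ≤ lval l K := by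
  rw [lval_eq, lval_eq]
  have : ∑ j ∈ J, l j ≤ ∑ j ∈ K, l j :=
    Finset.sum_le_sum_of_subset_of_nonneg h (fun i _ _ => (hl i).le)
  linarith

/-- Let `ℓ ∈ ℝ_{>0}^r` be generic with `r = 2k+1`, and let
`c ≥ 0` with `l(J) ≠ ±c` for all `J`. Put `L' = {J : l(J) > c and some
j ∈ J has l(J \ {j}) < −c}`. If `L'` is nonempty and every `J ∈ L'` has at
least `k+1` elements `j` with `l(J \ {j}) < −c`, then
`{J : l(J) > c} = {J : |J| ≥ k+1}` and `c < min {l(K) : l(K) > 0}`. -/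
theorem maximal_syzygy_combinatorics (k : ℕ) (l : Fin (2 * k + 1) → ℝ)
    (hl : ∀ j, 0 < l j) (hgen : ∀ J : Finset (Fin (2 * k + 1)), lval l J ≠ 0)
    (c : ℝ) (hc : 0 ≤ c)
    (hreg : ∀ J : Finset (Fin (2 * k + 1)), lval l J ≠ c ∧ lval l J ≠ -c)
    (hne : ∃ J : Finset (Fin (2 * k + 1)),
      c < lval l J ∧ ∃ j ∈ J, lval l (J.erase j) < -c)
    (hmany : ∀ J : Finset (Fin (2 * k + 1)),
      c < lval l J → (∃ j ∈ J, lval l (J.erase j) < -c) →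
        k + 1 ≤ (J.filter fun j => lval l (J.erase j) < -c).card) :
    (∀ J : Finset (Fin (2 * k + 1)), c < lval l J ↔ k + 1 ≤ J.card) ∧
      ∀ K : Finset (Fin (2 * k + 1)), 0 < lval l K → c < lval l K := by
  have hcardu : Fintype.card (Fin (2 * k + 1)) = 2 * k + 1 := Fintype.card_fin _
  have hcompl_card : ∀ J : Finset (Fin (2 * k + 1)), Jᶜ.card = 2 * k + 1 - J.card := by
    intro J; rw [Finset.card_compl, hcardu]
  -- the key property
  set P : Finset (Fin (2 * k + 1)) → Prop :=
    fun J => J.card = k + 1 ∧ c < lval l J ∧ ∀ j ∈ J, lval l (J.erase j) < -c with hP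
  -- from membership in L' with full filter, deduce P
  have hall : ∀ J : Finset (Fin (2 * k + 1)), J.card = k + 1 → c < lval l J →
      (∃ j ∈ J, lval l (J.erase j) < -c) → P J := by
    intro J hcard hJ hex
    refine ⟨hcard, hJ, ?_⟩
    have h1 := hmany J hJ hex
    have h2 : (J.filter fun j => lval l (J.erase j) < -c) = J := by
      apply Finset.eq_of_subset_of_card_le (Finset.filter_subset _ _)
      rw [hcard]; exact h1
    intro j hj
    have : j ∈ J.filter fun j => lval l (J.erase j) < -c := by rw [h2]; exact hj
    exact (Finset.mem_filter.mp this).2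
  -- the swap step
  have step : ∀ J : Finset (Fin (2 * k + 1)), P J → ∀ j ∈ J,
      ∀ a, a ∉ J.erase j → P (insert a (J.erase j)) := by
    intro J ⟨hcard, hJ, hall'⟩ j hj a ha
    have hje : lval l (J.erase j) < -c := hall' j hj
    -- A = (J.erase j)ᶜ
    set A := (J.erase j)ᶜ with hA
    have hAval : c < lval l A := by rw [hA, lval_compl]; linarith
    have hjA : j ∈ A := by
      rw [hA, Finset.mem_compl]; exact Finset.notMem_erase j J
    have hAej : A.erase j = Jᶜ := by
      have hjc : j ∉ Jᶜ := by simp [hj]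
      rw [hA, Finset.compl_erase, Finset.erase_insert hjc]
    have hAex : ∃ i ∈ A, lval l (A.erase i) < -c := by
      refine ⟨j, hjA, ?_⟩
      rw [hAej, lval_compl]; linarith
    have hAcard : A.card = k + 1 := by
      rw [hA, hcompl_card, Finset.card_erase_of_mem hj, hcard]
      omega
    have hPA : P A := hall A hAcard hAval hAex
    -- a ∈ A
    have haA : a ∈ A := by rw [hA, Finset.mem_compl]; exact ha
    have hAea : lval l (A.erase a) < -c := hPA.2.2 a haA
    have hBcompl : (A.erase a)ᶜ = insert a (J.erase j) := by
      rw [hA, Finset.compl_erase, compl_compl]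
    have hBval : c < lval l (insert a (J.erase j)) := by
      rw [← hBcompl, lval_compl]; linarith
    have hBcard : (insert a (J.erase j)).card = k + 1 := by
      rw [Finset.card_insert_of_notMem ha, Finset.card_erase_of_mem hj, hcard]
      omega
    refine hall _ hBcard hBval ⟨a, Finset.mem_insert_self _ _, ?_⟩
    rw [Finset.erase_insert ha]; exact hje
  -- base case: some J₀ with P J₀
  obtain ⟨J₀, hJ₀, j₀, hj₀, hj₀e⟩ := hne
  have hfilt := hmany J₀ hJ₀ ⟨j₀, hj₀, hj₀e⟩
  have hJ₀ge : k + 1 ≤ J₀.card :=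
    le_trans hfilt (Finset.card_le_card (Finset.filter_subset _ _))
  have hJ₀card : J₀.card = k + 1 := by
    -- A = (J₀.erase j₀)ᶜ is in L' and has card 2k+2 - |J₀| ≥ k+1
    set A := (J₀.erase j₀)ᶜ with hA
    have hAval : c < lval l A := by rw [hA, lval_compl]; linarith
    have hjA : j₀ ∈ A := by rw [hA, Finset.mem_compl]; exact Finset.notMem_erase _ _
    have hAej : A.erase j₀ = J₀ᶜ := by
      have hjc : j₀ ∉ J₀ᶜ := by simp [hj₀]
      rw [hA, Finset.compl_erase, Finset.erase_insert hjc]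
    have hAex : ∃ i ∈ A, lval l (A.erase i) < -c := by
      refine ⟨j₀, hjA, ?_⟩
      rw [hAej, lval_compl]; linarith
    have h1 := hmany A hAval hAex
    have h2 : (A.filter fun j => lval l (A.erase j) < -c).card ≤ A.card :=
      Finset.card_le_card (Finset.filter_subset _ _)
    have hAcard : A.card = 2 * k + 1 - (J₀.card - 1) := by
      rw [hA, hcompl_card, Finset.card_erase_of_mem hj₀]
    omega
  have hPJ₀ : P J₀ := hall J₀ hJ₀card hJ₀ ⟨j₀, hj₀, hj₀e⟩
  -- propagate to all (k+1)-sets by induction on |K \ J|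
  have prop : ∀ n : ℕ, ∀ J K : Finset (Fin (2 * k + 1)), P J → K.card = k + 1 →
      (K \ J).card = n → P K := by
    intro n
    induction n with
    | zero =>
      intro J K hPJ hK h0
      have hsub : K ⊆ J := by
        rw [← Finset.sdiff_eq_empty_iff_subset]
        exact Finset.card_eq_zero.mp h0
      have : K = J := Finset.eq_of_subset_of_card_le hsub (by rw [hK, hPJ.1])
      rwa [this]
    | succ n ih =>
      intro J K hPJ hK hsucc
      have hKJ : (K \ J).Nonempty := Finset.card_pos.mp (by omega)
      obtain ⟨a, haKJ⟩ := hKJ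
      have haK : a ∈ K := (Finset.mem_sdiff.mp haKJ).1
      have haJ : a ∉ J := (Finset.mem_sdiff.mp haKJ).2
      have hJK : (J \ K).Nonempty := by
        rw [Finset.sdiff_nonempty]
        intro hsub
        have : J = K := Finset.eq_of_subset_of_card_le hsub (by rw [hK, hPJ.1])
        rw [this] at hsucc
        simp at hsucc
      obtain ⟨j, hjJK⟩ := hJK
      have hjJ : j ∈ J := (Finset.mem_sdiff.mp hjJK).1
      have hjK : j ∉ K := (Finset.mem_sdiff.mp hjJK).2
      have haej : a ∉ J.erase j := fun h => haJ (Finset.mem_of_mem_erase h)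
      have hPJ' : P (insert a (J.erase j)) := step J hPJ j hjJ a haej
      apply ih _ K hPJ' hK
      have hset : K \ insert a (J.erase j) = (K \ J).erase a := by
        ext x
        simp only [Finset.mem_sdiff, Finset.mem_insert, Finset.mem_erase]
        constructor
        · rintro ⟨hxK, hx⟩
          push_neg at hx
          obtain ⟨hxa, hx2⟩ := hx
          have hxj : x ≠ j := fun h => hjK (h ▸ hxK)
          exact ⟨hxa, hxK, fun hxJ => (hx2 hxj) hxJ⟩
        · rintro ⟨hxa, hxK, hxJ⟩
          refine ⟨hxK, ?_⟩
          push_neg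
          exact ⟨hxa, fun _ => hxJ⟩
      rw [hset, Finset.card_erase_of_mem haKJ, hsucc]
      omega
  -- every set of card ≥ k+1 is long
  have hlong : ∀ J : Finset (Fin (2 * k + 1)), k + 1 ≤ J.card → c < lval l J := by
    intro J hJ
    obtain ⟨K, hKsub, hKcard⟩ := Finset.exists_subset_card_eq hJ
    have hPK : P K := prop (K \ J₀).card J₀ K hPJ₀ hKcard rfl
    exact lt_of_lt_of_le hPK.2.1 (lval_mono l hl hKsub)
  -- every set of card ≤ k is short
  have hshort : ∀ J : Finset (Fin (2 * k + 1)), J.card ≤ k → lval l J < -c := by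
    intro J hJ
    have : k + 1 ≤ Jᶜ.card := by rw [hcompl_card]; omega
    have := hlong Jᶜ this
    rw [lval_compl] at this
    linarith
  constructor
  · intro J
    constructor
    · intro hJ
      by_contra h
      have := hshort J (by omega)
      linarith
    · exact hlong J
  · intro K hK
    by_cases h : k + 1 ≤ K.card
    · exact hlong K h
    · have := hshort K (by omega)
      linarith
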